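/- Dead assignment elimination is semantics-preserving with respect to live-out variables: in a straight-line program, deleting an assignment 'v := e' such that v is not read by any later statement and v is not in the set of output variables yields a program whose final store agrees with the original on all output variables, for every initial store. -/

import Mathlib

inductive Expr (Var : Type) where
  | var : Var → Expr Var
  | const : ℤ → Expr Var
  | add : Expr Var → Expr Var → Expr Var
  | sub : Expr Var → Expr Var → Expr Var
  | mul : Expr Var → Expr Var → Expr Var

def Expr.eval {Var : Type} (σ : Var → ℤ) : Expr Var → ℤ
  | .var x => σ x
  | .const n => n
  | .add a b => a.eval σ + b.eval σ
  | .sub a b => a.eval σ - b.eval σ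
  | .mul a b => a.eval σ * b.eval σ

/-- `v` occurs (is read) in an expression. -/
def Expr.occurs {Var : Type} (v : Var) : Expr Var → Prop
  | .var x => x = v
  | .const _ => False
  | .add a b => a.occurs v ∨ b.occurs v
  | .sub a b => a.occurs v ∨ b.occurs v
  | .mul a b => a.occurs v ∨ b.occurs v

def run {Var : Type} [DecidableEq Var] : List (Var × Expr Var) → (Var → ℤ) → (Var → ℤ)
  | [], σ => σ
  | (v, e) :: p, σ => run p (Function.update σ v (e.eval σ))

lemma eval_agree {Var : Type} (v : Var) (e : Expr Var) (he : ¬ e.occurs v)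
    (σ σ' : Var → ℤ) (h : ∀ u, u ≠ v → σ u = σ' u) : e.eval σ = e.eval σ' := by
  induction e with
  | var x => exact h x (fun hx => he hx)
  | const n => rfl
  | add a b ha hb => simp only [Expr.eval]; rw [ha (fun o => he (Or.inl o)), hb (fun o => he (Or.inr o))]
  | sub a b ha hb => simp only [Expr.eval]; rw [ha (fun o => he (Or.inl o)), hb (fun o => he (Or.inr o))]
  | mul a b ha hb => simp only [Expr.eval]; rw [ha (fun o => he (Or.inl o)), hb (fun o => he (Or.inr o))]

lemma run_agree {Var : Type} [DecidableEq Var] (v : Var) :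
    ∀ (p : List (Var × Expr Var)) (σ σ' : Var → ℤ),
    (∀ s ∈ p, ¬ s.2.occurs v) → (∀ u, u ≠ v → σ u = σ' u) →
    ∀ u, u ≠ v → run p σ u = run p σ' u := by
  intro p
  induction p with
  | nil => intro σ σ' _ h u hu; exact h u hu
  | cons s p ih =>
    obtain ⟨w, f⟩ := s
    intro σ σ' hr h u hu
    simp only [run]
    apply ih _ _ (fun s hs => hr s (List.mem_cons_of_mem _ hs))
    · intro x hx
      rcases eq_or_ne x w with rfl | hne
      · simp only [Function.update_self]
        exact eval_agree v f (hr (x, f) List.mem_cons_self) σ σ' h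
      · simp only [Function.update_of_ne hne]; exact h x hx
    · exact hu
/-- Dead assignment elimination is semantics-preserving w.r.t. live-out
variables: deleting `v := e` when `v` is not read by any later statement and
`v` is not an output variable leaves the final store unchanged on every
output variable, for every initial store. -/
theorem deadAssignElim_preserves_outputs {Var : Type} [DecidableEq Var]
    (p₁ p₂ : List (Var × Expr Var)) (v : Var) (e : Expr Var) (O : Set Var)
    (hnotRead : ∀ s ∈ p₂, ¬ s.2.occurs v)
    (hnotOut : v ∉ O) :
    ∀ σ : Var → ℤ, ∀ u ∈ O,
      run (p₁ ++ [(v, e)] ++ p₂) σ u = run (p₁ ++ p₂) σ u := by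
  intro σ u hu
  induction p₁ generalizing σ with
  | nil =>
    simp only [List.nil_append, List.singleton_append, run]
    exact run_agree v p₂ _ σ hnotRead
      (fun x hx => Function.update_of_ne hx _ _) u (fun h => hnotOut (h ▸ hu))
  | cons s p₁ ih =>
    obtain ⟨w, f⟩ := s
    simp only [List.cons_append, run]
    exact ih _
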